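/- The function C_H(s,t) = s^{2H} + t^{2H} - (1/2)[(s+t)^{2H} + |s-t|^{2H}] is nonnegative for all s, t ≥ 0 when 0 < H < 1. -/

import Mathlib

private lemma rpow_subadd {q : ℝ} (hq0 : 0 ≤ q) (hq1 : q ≤ 1) {x y : ℝ}
    (hx : 0 ≤ x) (hy : 0 ≤ y) : (x + y) ^ q ≤ x ^ q + y ^ q := by
  lift x to NNReal using hx
  lift y to NNReal using hy
  exact_mod_cast NNReal.rpow_add_le_add_rpow x y hq0 hq1

private lemma rpow_clarkson {p : ℝ} (hp : 1 ≤ p) {x y : ℝ}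
    (hx : 0 ≤ x) (hy : 0 ≤ y) :
    (x + y) ^ p ≤ (2 : ℝ) ^ (p - 1) * (x ^ p + y ^ p) := by
  lift x to NNReal using hx
  lift y to NNReal using hy
  exact_mod_cast NNReal.rpow_add_le_mul_rpow_add_rpow x y hp

theorem subfbm_covariance_nonneg (H : ℝ) (hH : 0 < H ∧ H < 1) (s t : ℝ)
    (hs : 0 ≤ s) (ht : 0 ≤ t) :
    0 ≤ s ^ (2 * H) + t ^ (2 * H)
      - (1 / 2) * ((s + t) ^ (2 * H) + |s - t| ^ (2 * H)) := by
  obtain ⟨hH0, hH1⟩ := hH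
  set a : ℝ := 2 * H with ha
  have ha0 : 0 < a := by positivity
  have ha2 : a < 2 := by linarith
  have habs : (0:ℝ) ≤ |s - t| := abs_nonneg _
  have key : (s + t) ^ a + |s - t| ^ a ≤ 2 * (s ^ a + t ^ a) := by
    rcases le_or_gt a 1 with h1 | h1
    · -- concave case: subadditivity
      have h2 : (s + t) ^ a ≤ s ^ a + t ^ a := rpow_subadd ha0.le h1 hs ht
      have h3 : |s - t| ^ a ≤ s ^ a + t ^ a := by
        have hm : |s - t| ≤ max s t := by
          rcases le_total s t with h | h
          · rw [abs_of_nonpos (by linarith)]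
            calc -(s - t) = t - s := by ring
            _ ≤ max s t := by
              have := le_max_right s t; linarith
          · rw [abs_of_nonneg (by linarith)]
            have := le_max_left s t; linarith
        have hmax : max s t ^ a ≤ s ^ a + t ^ a := by
          rcases le_total s t with h | h
          · rw [max_eq_right h]
            have : (0:ℝ) ≤ s ^ a := Real.rpow_nonneg hs a
            linarith
          · rw [max_eq_left h]
            have : (0:ℝ) ≤ t ^ a := Real.rpow_nonneg ht a
            linarith
        calc |s - t| ^ a ≤ max s t ^ a :=
              Real.rpow_le_rpow habs hm ha0.le
          _ ≤ s ^ a + t ^ a := hmax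
      linarith
    · -- convex case 1 < a < 2
      set x := s + t
      set y := |s - t|
      have hx : 0 ≤ x := by positivity
      have hy : 0 ≤ y := habs
      have hxa : 0 ≤ x ^ a := Real.rpow_nonneg hx a
      have hya : 0 ≤ y ^ a := Real.rpow_nonneg hy a
      have hp1 : (1:ℝ) ≤ 2 / a := by
        rw [le_div_iff₀ ha0]; linarith
      -- Clarkson with z₁ = x^a, z₂ = y^a, p = 2/a
      have h1 : (x ^ a + y ^ a) ^ (2 / a) ≤
          (2:ℝ) ^ (2 / a - 1) * ((x ^ a) ^ (2 / a) + (y ^ a) ^ (2 / a)) :=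
        rpow_clarkson hp1 hxa hya
      have hxr : (x ^ a) ^ (2 / a) = x ^ (2:ℝ) := by
        rw [← Real.rpow_mul hx]
        congr 1
        field_simp
      have hyr : (y ^ a) ^ (2 / a) = y ^ (2:ℝ) := by
        rw [← Real.rpow_mul hy]
        congr 1
        field_simp
      rw [hxr, hyr] at h1
      have hsq : x ^ (2:ℝ) + y ^ (2:ℝ) = 2 * (s ^ (2:ℝ) + t ^ (2:ℝ)) := by
        rw [Real.rpow_two, Real.rpow_two, Real.rpow_two, Real.rpow_two]
        have : y ^ 2 = (s - t) ^ 2 := sq_abs _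
        rw [this]; ring
      rw [hsq] at h1
      -- raise both sides to a/2
      have hpow : x ^ a + y ^ a ≤
          ((2:ℝ) ^ (2 / a - 1) * (2 * (s ^ (2:ℝ) + t ^ (2:ℝ)))) ^ (a / 2) := by
        have hh := Real.rpow_le_rpow (Real.rpow_nonneg (by positivity) _) h1
          (by positivity : (0:ℝ) ≤ a / 2)
        rwa [← Real.rpow_mul (by positivity), div_mul_div_comm,
          mul_comm (2:ℝ) a, div_self (by positivity : a * 2 ≠ 0), Real.rpow_one] at hh
      have hst2 : (0:ℝ) ≤ s ^ (2:ℝ) + t ^ (2:ℝ) := by positivity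
      have hexp : (2 / a - 1) * (a / 2) + a / 2 = 1 := by
        field_simp
        ring
      have hrhs : ((2:ℝ) ^ (2 / a - 1) * (2 * (s ^ (2:ℝ) + t ^ (2:ℝ)))) ^ (a / 2)
          = 2 * (s ^ (2:ℝ) + t ^ (2:ℝ)) ^ (a / 2) := by
        rw [Real.mul_rpow (by positivity) (by positivity),
          Real.mul_rpow (by positivity) hst2,
          ← Real.rpow_mul (by norm_num : (0:ℝ) ≤ 2), ← mul_assoc,
          ← Real.rpow_add (by norm_num : (0:ℝ) < 2), hexp, Real.rpow_one]
      rw [hrhs] at hpow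
      have hsub : (s ^ (2:ℝ) + t ^ (2:ℝ)) ^ (a / 2) ≤ s ^ a + t ^ a := by
        have h4 := rpow_subadd (by positivity : (0:ℝ) ≤ a / 2)
          (by linarith : a / 2 ≤ 1)
          (Real.rpow_nonneg hs 2) (Real.rpow_nonneg ht 2)
        rwa [← Real.rpow_mul hs, ← Real.rpow_mul ht,
          (by ring : 2 * (a / 2) = a)] at h4
      nlinarith [hpow, hsub]
  linarith [key]
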